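/- Let H1, H2, H3, H4 be subgroups of a finite group G. Then |H1| · |H2| · |H3 ∩ H4| · |H1 ∩ H2 ∩ H3 ∩ H4| ≥ |H1 ∩ H3| · |H1 ∩ H4| · |H2 ∩ H3| · |H2 ∩ H4|. -/

import Mathlib

private lemma card_eq_relIndex_mul_card_inf {G : Type*} [Group G] [Finite G]
    (H K : Subgroup G) :
    Nat.card K = H.relIndex K * Nat.card (H ⊓ K : Subgroup G) := by
  have h1 : Nat.card (H.subgroupOf K) * (H.subgroupOf K).index = Nat.card K :=
    Subgroup.card_mul_index _
  have h2 : Nat.card (H.subgroupOf K) = Nat.card (H ⊓ K : Subgroup G) := by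
    rw [← Subgroup.inf_subgroupOf_right]
    exact Nat.card_congr (Subgroup.subgroupOfEquivOfLe inf_le_right).toEquiv
  rw [← h1, h2, Subgroup.relIndex, mul_comm]

private lemma key_ineq {G : Type*} [Group G] [Finite G] (A B C : Subgroup G) :
    Nat.card (C ⊓ A : Subgroup G) * Nat.card (C ⊓ B : Subgroup G) ≤
    Nat.card C * Nat.card (C ⊓ A ⊓ B : Subgroup G) := by
  have e1 : B ⊓ (C ⊓ A) = C ⊓ A ⊓ B := by rw [inf_comm]
  have hrel : B.relIndex (C ⊓ A) ≤ B.relIndex C := by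
    apply Subgroup.relIndex_le_of_le_right inf_le_left
    exact Subgroup.index_ne_zero_of_finite
  calc Nat.card (C ⊓ A : Subgroup G) * Nat.card (C ⊓ B : Subgroup G)
      = B.relIndex (C ⊓ A) * Nat.card (C ⊓ A ⊓ B : Subgroup G)
          * Nat.card (C ⊓ B : Subgroup G) := by
        rw [← e1, ← card_eq_relIndex_mul_card_inf]
    _ ≤ B.relIndex C * Nat.card (C ⊓ A ⊓ B : Subgroup G)
          * Nat.card (C ⊓ B : Subgroup G) := by
        exact Nat.mul_le_mul_right _ (Nat.mul_le_mul_right _ hrel)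
    _ = (B.relIndex C * Nat.card (B ⊓ C : Subgroup G))
          * Nat.card (C ⊓ A ⊓ B : Subgroup G) := by
        rw [inf_comm B C]; ring
    _ = Nat.card C * Nat.card (C ⊓ A ⊓ B : Subgroup G) := by
        rw [← card_eq_relIndex_mul_card_inf]

theorem stmt4 {G : Type*} [Group G] [Finite G] (H1 H2 H3 H4 : Subgroup G) :
    Nat.card H1 * Nat.card H2 * Nat.card (H3 ⊓ H4 : Subgroup G) *
      Nat.card (H1 ⊓ H2 ⊓ H3 ⊓ H4 : Subgroup G) ≥
    Nat.card (H1 ⊓ H3 : Subgroup G) * Nat.card (H1 ⊓ H4 : Subgroup G) *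
      Nat.card (H2 ⊓ H3 : Subgroup G) * Nat.card (H2 ⊓ H4 : Subgroup G) := by
  have k1 := key_ineq H3 H4 H1
  have k2 := key_ineq H3 H4 H2
  have k3 := key_ineq H1 H2 (H3 ⊓ H4)
  have e1 : H3 ⊓ H4 ⊓ H1 = H1 ⊓ H3 ⊓ H4 := by
    rw [inf_comm (H3 ⊓ H4) H1, inf_assoc]
  have e2 : H3 ⊓ H4 ⊓ H2 = H2 ⊓ H3 ⊓ H4 := by
    rw [inf_comm (H3 ⊓ H4) H2, inf_assoc]
  have e3 : H3 ⊓ H4 ⊓ H1 ⊓ H2 = H1 ⊓ H2 ⊓ (H3 ⊓ H4) := by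
    rw [inf_comm (H3 ⊓ H4) H1, inf_assoc H1, inf_comm (H3 ⊓ H4) H2, ← inf_assoc H1,
      inf_assoc]
  have e4 : H1 ⊓ H2 ⊓ H3 ⊓ H4 = H1 ⊓ H2 ⊓ (H3 ⊓ H4) := by rw [inf_assoc]
  rw [ge_iff_le]
  calc Nat.card (H1 ⊓ H3 : Subgroup G) * Nat.card (H1 ⊓ H4 : Subgroup G) *
        Nat.card (H2 ⊓ H3 : Subgroup G) * Nat.card (H2 ⊓ H4 : Subgroup G)
      ≤ (Nat.card H1 * Nat.card (H1 ⊓ H3 ⊓ H4 : Subgroup G)) *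
        (Nat.card H2 * Nat.card (H2 ⊓ H3 ⊓ H4 : Subgroup G)) := by
        have : Nat.card (H1 ⊓ H3 : Subgroup G) * Nat.card (H1 ⊓ H4 : Subgroup G) *
            Nat.card (H2 ⊓ H3 : Subgroup G) * Nat.card (H2 ⊓ H4 : Subgroup G)
            = (Nat.card (H1 ⊓ H3 : Subgroup G) * Nat.card (H1 ⊓ H4 : Subgroup G)) *
              (Nat.card (H2 ⊓ H3 : Subgroup G) * Nat.card (H2 ⊓ H4 : Subgroup G)) := by ring
        rw [this]
        exact Nat.mul_le_mul k1 k2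
    _ = (Nat.card H1 * Nat.card H2) *
        (Nat.card (H3 ⊓ H4 ⊓ H1 : Subgroup G) * Nat.card (H3 ⊓ H4 ⊓ H2 : Subgroup G)) := by
        rw [e1, e2]; ring
    _ ≤ (Nat.card H1 * Nat.card H2) *
        (Nat.card (H3 ⊓ H4 : Subgroup G) * Nat.card (H3 ⊓ H4 ⊓ H1 ⊓ H2 : Subgroup G)) :=
        Nat.mul_le_mul_left _ k3
    _ = Nat.card H1 * Nat.card H2 * Nat.card (H3 ⊓ H4 : Subgroup G) *
        Nat.card (H1 ⊓ H2 ⊓ H3 ⊓ H4 : Subgroup G) := by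
        rw [e3, e4]; ring
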